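/- Let A be a symmetric real n×n matrix, x a unit eigenvector of A with eigenvalue λ, and m ≥ 1. Let B be the (n+mn)×(n+mn) block matrix with top-left block A, top-right block A⊗1_{1×m} (i.e. m horizontal copies of A), bottom-left block A⊗1_{m×1}, and bottom-right block the mn×mn zero matrix. If μ ≠ 0 satisfies μ² - λμ - mλ² = 0 and c = λ/μ, then the vector y = (x, c·(1_m ⊗ x)) (the vector whose first n coordinates are x and whose remaining coordinates consist of m copies of c·x) satisfies B y = μ y. -/

import Mathlib

theorem stmt_4 (n m : ℕ) (hm : 1 ≤ m)
    (A : Matrix (Fin n) (Fin n) ℝ) (hA : A.IsSymm)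
    (x : Fin n → ℝ) (hx : ∑ i, x i ^ 2 = 1)
    (lam : ℝ) (hAx : A.mulVec x = lam • x)
    (mu : ℝ) (hmu0 : mu ≠ 0) (hmu : mu ^ 2 - lam * mu - m * lam ^ 2 = 0)
    (c : ℝ) (hc : c = lam / mu)
    (B : Matrix (Fin n ⊕ Fin m × Fin n) (Fin n ⊕ Fin m × Fin n) ℝ)
    (hB : B = Matrix.fromBlocks A
      (Matrix.of fun i (p : Fin m × Fin n) => A i p.2)
      (Matrix.of fun (p : Fin m × Fin n) j => A p.2 j)
      0)
    (y : Fin n ⊕ Fin m × Fin n → ℝ)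
    (hy : y = Sum.elim x (fun p => c * x p.2)) :
    B.mulVec y = mu • y := by
  have hmuc : mu * c = lam := by
    rw [hc]; field_simp
  have hkey : lam + m * c * lam = mu := by
    have : mu * (lam + m * c * lam) = mu * mu := by
      have : mu * (m * c * lam) = m * lam ^ 2 := by
        rw [show mu * (m * c * lam) = (m : ℝ) * ((mu * c) * lam) by ring, hmuc]; ring
      nlinarith [hmu]
    exact mul_left_cancel₀ hmu0 this
  have hAx' : ∀ i, ∑ j, A i j * x j = lam * x i := by
    intro i
    have := congrFun hAx i
    simpa [Matrix.mulVec, dotProduct] using this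
  subst hB hy
  funext j
  cases j with
  | inl i =>
    simp only [Matrix.mulVec, dotProduct, Fintype.sum_sum_type,
      Matrix.fromBlocks_apply₁₁, Matrix.fromBlocks_apply₁₂, Sum.elim_inl, Sum.elim_inr,
      Matrix.of_apply, Pi.smul_apply, smul_eq_mul, Fintype.sum_prod_type]
    have h1 : ∀ k : Fin m, ∑ j, A i j * (c * x j) = c * (lam * x i) := by
      intro k
      rw [show (∑ j, A i j * (c * x j)) = c * ∑ j, A i j * x j by
        rw [Finset.mul_sum]; exact Finset.sum_congr rfl fun _ _ => by ring]
      rw [hAx' i]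
    rw [hAx' i]
    rw [Finset.sum_congr rfl fun k _ => h1 k]
    simp [Finset.sum_const]
    linear_combination (x i) * hkey
  | inr p =>
    simp only [Matrix.mulVec, dotProduct, Fintype.sum_sum_type,
      Matrix.fromBlocks_apply₂₁, Matrix.fromBlocks_apply₂₂, Sum.elim_inl, Sum.elim_inr,
      Matrix.of_apply, Pi.smul_apply, smul_eq_mul, Matrix.zero_apply, zero_mul,
      Finset.sum_const_zero, add_zero]
    rw [hAx' p.2]
    linear_combination (- x p.2) * hmuc
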